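/- Let T ≥ 1 and Ḡ ≥ 0. Define Γ: ℝ^T × [0, Ḡ]^T → ℝ by Γ(u, v) = Σ_{t=1}^T v_t · ∏_{t'=1}^{t-1}(1 - σ(u_{t'})) · σ(u_t). Then the gradient of Γ satisfies ‖∇Γ(u,v)‖_2 ≤ Ḡ + 1 at every point, and consequently Γ is Lipschitz continuous with constant Ḡ + 1 with respect to the L² norm on ℝ^{2T}. -/

import Mathlib

noncomputable def logistic (u : ℝ) : ℝ := Real.exp u / (1 + Real.exp u)

/-- The realization-to-reward map `Γ(u, v) = ∑_t v_t ∏_{t'<t}(1-σ(u_{t'})) σ(u_t)`,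
viewed as a function on `ℝ^{2T}` with the Euclidean (L²) norm; the first `T`
coordinates (indexed by `Sum.inl`) are `u` and the last `T` (indexed by
`Sum.inr`) are `v`. -/
noncomputable def Gamma (T : ℕ) (x : EuclideanSpace ℝ (Fin T ⊕ Fin T)) : ℝ :=
  ∑ t : Fin T, x (Sum.inr t) *
    ((∏ t' ∈ Finset.Iio t, (1 - logistic (x (Sum.inl t')))) * logistic (x (Sum.inl t)))

variable {T : ℕ}

noncomputable def pf (x : EuclideanSpace ℝ (Fin T ⊕ Fin T)) (t : Fin T) : ℝ :=
  (∏ t' ∈ Finset.Iio t, (1 - logistic (x (Sum.inl t')))) * logistic (x (Sum.inl t))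

noncomputable def gradG (x : EuclideanSpace ℝ (Fin T ⊕ Fin T)) :
    EuclideanSpace ℝ (Fin T ⊕ Fin T) :=
  WithLp.toLp 2 (Sum.elim
    (fun s => x (Sum.inr s) * ((1 - logistic (x (Sum.inl s))) * pf x s)
      - logistic (x (Sum.inl s)) * ∑ t ∈ Finset.Ioi s, x (Sum.inr t) * pf x t)
    (fun t => pf x t))

/-- derivative of `y ↦ logistic (y i)` -/
noncomputable def dlog (x : EuclideanSpace ℝ (Fin T ⊕ Fin T)) (i : Fin T ⊕ Fin T) :
    EuclideanSpace ℝ (Fin T ⊕ Fin T) →L[ℝ] ℝ :=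
  (logistic (x i) * (1 - logistic (x i))) • (EuclideanSpace.proj i)

/-- derivative of `y ↦ ∏_{t'<t} (1 - logistic (y (inl t')))` -/
noncomputable def dA (x : EuclideanSpace ℝ (Fin T ⊕ Fin T)) (t : Fin T) :
    EuclideanSpace ℝ (Fin T ⊕ Fin T) →L[ℝ] ℝ :=
  ∑ s ∈ Finset.Iio t,
    (∏ j ∈ (Finset.Iio t).erase s, (1 - logistic (x (Sum.inl j)))) • (-dlog x (Sum.inl s))

noncomputable def dG (x : EuclideanSpace ℝ (Fin T ⊕ Fin T)) (t : Fin T) :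
    EuclideanSpace ℝ (Fin T ⊕ Fin T) →L[ℝ] ℝ :=
  x (Sum.inr t) •
      ((∏ t' ∈ Finset.Iio t, (1 - logistic (x (Sum.inl t')))) • dlog x (Sum.inl t) +
        logistic (x (Sum.inl t)) • dA x t) +
    pf x t • (EuclideanSpace.proj (Sum.inr t))

lemma hasDerivAt_logistic (u : ℝ) :
    HasDerivAt logistic (logistic u * (1 - logistic u)) u := by
  have h : (1 : ℝ) + Real.exp u ≠ 0 := by positivity
  have := (Real.hasDerivAt_exp u).div ((hasDerivAt_const u (1:ℝ)).add (Real.hasDerivAt_exp u)) h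
  refine this.congr_deriv ?_
  unfold logistic
  simp only [Pi.add_apply]
  field_simp
  ring

lemma hasFDerivAt_Gamma' (x : EuclideanSpace ℝ (Fin T ⊕ Fin T)) :
    HasFDerivAt (Gamma T) (∑ t : Fin T, dG x t) x := by
  classical
  have hproj : ∀ i : Fin T ⊕ Fin T,
      HasFDerivAt (fun y : EuclideanSpace ℝ (Fin T ⊕ Fin T) => y i)
        (EuclideanSpace.proj i : EuclideanSpace ℝ (Fin T ⊕ Fin T) →L[ℝ] ℝ) x := by
    intro i
    have h := (EuclideanSpace.proj i : EuclideanSpace ℝ (Fin T ⊕ Fin T) →L[ℝ] ℝ).hasFDerivAt (x := x)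
    exact h
  have hlog : ∀ i : Fin T ⊕ Fin T,
      HasFDerivAt (fun y : EuclideanSpace ℝ (Fin T ⊕ Fin T) => logistic (y i))
        (dlog x i) x :=
    fun i => by have h := (hasDerivAt_logistic (x i)).comp_hasFDerivAt x (hproj i); exact h
  have hA : ∀ t : Fin T,
      HasFDerivAt (fun y : EuclideanSpace ℝ (Fin T ⊕ Fin T) =>
          ∏ t' ∈ Finset.Iio t, (1 - logistic (y (Sum.inl t')))) (dA x t) x :=
    fun t => HasFDerivAt.finset_prod (fun s _ => (hlog (Sum.inl s)).const_sub 1)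
  apply HasFDerivAt.fun_sum
  intro t _
  exact (hproj (Sum.inr t)).mul ((hA t).mul (hlog (Sum.inl t)))

lemma alg {T : ℕ} (v σ A hl : Fin T → ℝ)
    (hE : ∀ t : Fin T, ∀ s ∈ Finset.Iio t,
      (1 - σ s) * ∏ j ∈ (Finset.Iio t).erase s, (1 - σ j) = A t) :
    ∑ t : Fin T, v t * (A t * (σ t * (1 - σ t) * hl t) +
        σ t * ∑ s ∈ Finset.Iio t,
          (∏ j ∈ (Finset.Iio t).erase s, (1 - σ j)) * -(σ s * (1 - σ s) * hl s))
      = ∑ s : Fin T, (v s * ((1 - σ s) * (A s * σ s)) -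
          σ s * ∑ t ∈ Finset.Ioi s, v t * (A t * σ t)) * hl s := by
  have step : ∀ t : Fin T, v t * (A t * (σ t * (1 - σ t) * hl t) +
        σ t * ∑ s ∈ Finset.Iio t,
          (∏ j ∈ (Finset.Iio t).erase s, (1 - σ j)) * -(σ s * (1 - σ s) * hl s))
      = v t * ((1 - σ t) * (A t * σ t)) * hl t
        - ∑ s ∈ Finset.Iio t, σ s * (v t * (A t * σ t)) * hl s := by
    intro t
    have e1 : ∑ s ∈ Finset.Iio t,
        (∏ j ∈ (Finset.Iio t).erase s, (1 - σ j)) * -(σ s * (1 - σ s) * hl s)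
        = -∑ s ∈ Finset.Iio t, σ s * A t * hl s := by
      rw [← Finset.sum_neg_distrib]
      refine Finset.sum_congr rfl fun s hs => ?_
      rw [← hE t s hs]; ring
    have e2 : ∑ s ∈ Finset.Iio t, σ s * (v t * (A t * σ t)) * hl s
        = v t * σ t * ∑ s ∈ Finset.Iio t, σ s * A t * hl s := by
      rw [Finset.mul_sum]
      exact Finset.sum_congr rfl fun s _ => by ring
    rw [e1, e2]; ring
  rw [Finset.sum_congr rfl fun t _ => step t, Finset.sum_sub_distrib]
  have swap : ∑ t : Fin T, ∑ s ∈ Finset.Iio t, σ s * (v t * (A t * σ t)) * hl s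
      = ∑ s : Fin T, ∑ t ∈ Finset.Ioi s, σ s * (v t * (A t * σ t)) * hl s := by
    apply Finset.sum_comm'
    intro a b; simp
  rw [swap, ← Finset.sum_sub_distrib]
  refine Finset.sum_congr rfl fun s _ => ?_
  have e3 : ∑ t ∈ Finset.Ioi s, σ s * (v t * (A t * σ t)) * hl s
      = σ s * (∑ t ∈ Finset.Ioi s, v t * (A t * σ t)) * hl s := by
    rw [Finset.mul_sum, Finset.sum_mul]
  rw [e3]; ring

lemma sum_dG_eq (x : EuclideanSpace ℝ (Fin T ⊕ Fin T)) :
    (∑ t : Fin T, dG x t) = innerSL ℝ (gradG x) := by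
  classical
  ext h
  simp only [ContinuousLinearMap.coe_sum', Finset.sum_apply, dG, dA, dlog,
    ContinuousLinearMap.add_apply, ContinuousLinearMap.smul_apply,
    ContinuousLinearMap.coe_smul', Pi.smul_apply, ContinuousLinearMap.neg_apply,
    PiLp.proj_apply, smul_eq_mul, innerSL_apply_apply, PiLp.inner_apply,
    RCLike.inner_apply, conj_trivial, Fintype.sum_sum_type, gradG, Sum.elim_inl,
    Sum.elim_inr]
  simp only [pf]
  rw [Finset.sum_add_distrib]
  congr 1
  exact (alg (fun t => x (Sum.inr t)) (fun t => logistic (x (Sum.inl t)))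
    (fun t => ∏ t' ∈ Finset.Iio t, (1 - logistic (x (Sum.inl t'))))
    (fun i => h (Sum.inl i))
    (fun t s hs => by
      simpa using Finset.mul_prod_erase (Finset.Iio t) (fun j => 1 - logistic (x (Sum.inl j))) hs)).trans
      (Finset.sum_congr rfl fun _ _ => mul_comm _ _)
  exact Finset.sum_congr rfl fun _ _ => mul_comm _ _

lemma logistic_nonneg (u : ℝ) : 0 ≤ logistic u := by
  unfold logistic; positivity

lemma logistic_le_one (u : ℝ) : logistic u ≤ 1 := by
  unfold logistic
  rw [div_le_one (by positivity)]
  linarith [Real.exp_pos u]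

lemma sum_filter_prod {T : ℕ} (c : Fin T → ℝ) (A : Finset (Fin T)) :
    ∑ t ∈ A, c t * ∏ j ∈ A.filter (· < t), (1 - c j) = 1 - ∏ j ∈ A, (1 - c j) := by
  classical
  induction A using Finset.induction_on_max with
  | empty => simp
  | insert a s ha ih =>
    have hans : a ∉ s := fun h => lt_irrefl a (ha a h)
    have hfa : (insert a s).filter (· < a) = s := by
      ext j
      simp only [Finset.mem_filter, Finset.mem_insert]
      constructor
      · rintro ⟨rfl | hj, hlt⟩
        · exact absurd hlt (lt_irrefl _)
        · exact hj
      · exact fun hj => ⟨Or.inr hj, ha j hj⟩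
    have hft : ∀ t ∈ s, (insert a s).filter (· < t) = s.filter (· < t) := by
      intro t ht
      ext j
      simp only [Finset.mem_filter, Finset.mem_insert]
      constructor
      · rintro ⟨rfl | hj, hlt⟩
        · exact absurd (lt_trans hlt (ha t ht)) (lt_irrefl _)
        · exact ⟨hj, hlt⟩
      · exact fun ⟨hj, hlt⟩ => ⟨Or.inr hj, hlt⟩
    rw [Finset.sum_insert hans, Finset.prod_insert hans, hfa,
      Finset.sum_congr rfl (fun t ht => by rw [hft t ht]), ih]
    ring

section Bounds
variable (x : EuclideanSpace ℝ (Fin T ⊕ Fin T))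

lemma prodIio_nonneg (S : Finset (Fin T)) :
    0 ≤ ∏ j ∈ S, (1 - logistic (x (Sum.inl j))) :=
  Finset.prod_nonneg fun j _ => by linarith [logistic_le_one (x (Sum.inl j))]

lemma prodIio_le_one (S : Finset (Fin T)) :
    ∏ j ∈ S, (1 - logistic (x (Sum.inl j))) ≤ 1 :=
  Finset.prod_le_one (fun j _ => by linarith [logistic_le_one (x (Sum.inl j))])
    (fun j _ => by linarith [logistic_nonneg (x (Sum.inl j))])

lemma pf_nonneg (t : Fin T) : 0 ≤ pf x t :=
  mul_nonneg (prodIio_nonneg x _) (logistic_nonneg _)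

lemma pf_le_one (t : Fin T) : pf x t ≤ 1 :=
  mul_le_one₀ (prodIio_le_one x _) (logistic_nonneg _) (logistic_le_one _)

lemma Iio_eq_filter (t : Fin T) : Finset.Iio t = Finset.univ.filter (· < t) := by
  ext j; simp

lemma sum_pf_le_one : ∑ t : Fin T, pf x t ≤ 1 := by
  have key := sum_filter_prod (fun t => logistic (x (Sum.inl t))) Finset.univ
  have h1 : ∑ t : Fin T, pf x t
      = ∑ t : Fin T, logistic (x (Sum.inl t)) *
          ∏ j ∈ Finset.univ.filter (· < t), (1 - logistic (x (Sum.inl j))) := by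
    refine Finset.sum_congr rfl fun t _ => ?_
    rw [pf, ← Iio_eq_filter, mul_comm]
  rw [h1, key]
  linarith [prodIio_nonneg x Finset.univ]

lemma sum_pf_Ioi_le (s : Fin T) :
    ∑ t ∈ Finset.Ioi s, pf x t
      ≤ (1 - logistic (x (Sum.inl s))) * ∏ j ∈ Finset.Iio s, (1 - logistic (x (Sum.inl j))) := by
  classical
  have key := sum_filter_prod (fun t => logistic (x (Sum.inl t))) (Finset.Ioi s)
  have hsplit : ∀ t ∈ Finset.Ioi s,
      Finset.Iio t = Finset.Iic s ∪ (Finset.Ioi s).filter (· < t) := by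
    intro t ht
    rw [Finset.mem_Ioi] at ht
    ext j
    simp only [Finset.mem_Iio, Finset.mem_union, Finset.mem_Iic, Finset.mem_filter,
      Finset.mem_Ioi]
    constructor
    · intro hj
      rcases le_or_gt j s with h | h
      · exact Or.inl h
      · exact Or.inr ⟨h, hj⟩
    · rintro (h | ⟨_, h⟩)
      · exact lt_of_le_of_lt h ht
      · exact h
  have hdisj : ∀ t : Fin T, Disjoint (Finset.Iic s) ((Finset.Ioi s).filter (· < t)) := by
    intro t
    rw [Finset.disjoint_left]
    intro j hj hj'
    rw [Finset.mem_Iic] at hj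
    rw [Finset.mem_filter, Finset.mem_Ioi] at hj'
    exact absurd (lt_of_le_of_lt hj hj'.1) (lt_irrefl _)
  have h1 : ∑ t ∈ Finset.Ioi s, pf x t
      = (∏ j ∈ Finset.Iic s, (1 - logistic (x (Sum.inl j)))) *
          ∑ t ∈ Finset.Ioi s, logistic (x (Sum.inl t)) *
            ∏ j ∈ (Finset.Ioi s).filter (· < t), (1 - logistic (x (Sum.inl j))) := by
    rw [Finset.mul_sum]
    refine Finset.sum_congr rfl fun t ht => ?_
    rw [pf, hsplit t ht, Finset.prod_union (hdisj t)]
    ring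
  have hIic : ∏ j ∈ Finset.Iic s, (1 - logistic (x (Sum.inl j)))
      = (1 - logistic (x (Sum.inl s))) * ∏ j ∈ Finset.Iio s, (1 - logistic (x (Sum.inl j))) := by
    rw [← Finset.Iio_insert, Finset.prod_insert (by simp)]
  have h2 : ∑ t ∈ Finset.Ioi s, logistic (x (Sum.inl t)) *
        ∏ j ∈ (Finset.Ioi s).filter (· < t), (1 - logistic (x (Sum.inl j))) ≤ 1 := by
    rw [key]
    linarith [prodIio_nonneg x (Finset.Ioi s)]
  calc ∑ t ∈ Finset.Ioi s, pf x t
      = _ := h1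
    _ ≤ (∏ j ∈ Finset.Iic s, (1 - logistic (x (Sum.inl j)))) * 1 := by
        apply mul_le_mul_of_nonneg_left h2 (prodIio_nonneg x _)
    _ = (1 - logistic (x (Sum.inl s))) * ∏ j ∈ Finset.Iio s, (1 - logistic (x (Sum.inl j))) := by
        rw [mul_one, hIic]

end Bounds

lemma abs_gradG_inl_le (Gbar : ℝ) (hG : 0 ≤ Gbar) (x : EuclideanSpace ℝ (Fin T ⊕ Fin T))
    (hv : ∀ t : Fin T, x (Sum.inr t) ∈ Set.Icc (0 : ℝ) Gbar) (s : Fin T) :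
    |gradG x (Sum.inl s)| ≤ Gbar * pf x s := by
  have hg : gradG x (Sum.inl s) = x (Sum.inr s) * ((1 - logistic (x (Sum.inl s))) * pf x s)
      - logistic (x (Sum.inl s)) * ∑ t ∈ Finset.Ioi s, x (Sum.inr t) * pf x t := rfl
  have hσ0 := logistic_nonneg (x (Sum.inl s))
  have hσ1 := logistic_le_one (x (Sum.inl s))
  have hpf0 := pf_nonneg x s
  have hP0 := prodIio_nonneg x (Finset.Iio s)
  have hpf : pf x s = (∏ j ∈ Finset.Iio s, (1 - logistic (x (Sum.inl j)))) *
      logistic (x (Sum.inl s)) := rfl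
  have hA0 : 0 ≤ x (Sum.inr s) * ((1 - logistic (x (Sum.inl s))) * pf x s) :=
    mul_nonneg (hv s).1 (mul_nonneg (by linarith) hpf0)
  have hA1 : x (Sum.inr s) * ((1 - logistic (x (Sum.inl s))) * pf x s) ≤ Gbar * pf x s := by
    nlinarith [(hv s).1, (hv s).2, mul_nonneg (mul_nonneg (hv s).1 hσ0) hpf0,
      mul_nonneg (sub_nonneg.mpr (hv s).2) hpf0]
  have hB0 : 0 ≤ logistic (x (Sum.inl s)) * ∑ t ∈ Finset.Ioi s, x (Sum.inr t) * pf x t :=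
    mul_nonneg hσ0 (Finset.sum_nonneg fun t _ => mul_nonneg (hv t).1 (pf_nonneg x t))
  have hsum1 : ∑ t ∈ Finset.Ioi s, x (Sum.inr t) * pf x t
      ≤ Gbar * ((1 - logistic (x (Sum.inl s))) *
          ∏ j ∈ Finset.Iio s, (1 - logistic (x (Sum.inl j)))) := by
    calc ∑ t ∈ Finset.Ioi s, x (Sum.inr t) * pf x t
        ≤ ∑ t ∈ Finset.Ioi s, Gbar * pf x t :=
          Finset.sum_le_sum fun t _ => mul_le_mul_of_nonneg_right (hv t).2 (pf_nonneg x t)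
      _ = Gbar * ∑ t ∈ Finset.Ioi s, pf x t := (Finset.mul_sum _ _ _).symm
      _ ≤ _ := mul_le_mul_of_nonneg_left (sum_pf_Ioi_le x s) hG
  have hB1 : logistic (x (Sum.inl s)) * ∑ t ∈ Finset.Ioi s, x (Sum.inr t) * pf x t
      ≤ Gbar * pf x s := by
    have h2 : logistic (x (Sum.inl s)) * ∑ t ∈ Finset.Ioi s, x (Sum.inr t) * pf x t
        ≤ logistic (x (Sum.inl s)) * (Gbar * ((1 - logistic (x (Sum.inl s))) *
            ∏ j ∈ Finset.Iio s, (1 - logistic (x (Sum.inl j))))) :=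
      mul_le_mul_of_nonneg_left hsum1 hσ0
    refine le_trans h2 ?_
    rw [hpf]
    nlinarith [mul_nonneg (mul_nonneg hG hσ0) (mul_nonneg hP0 hσ0)]
  rw [hg]
  rw [abs_le]
  constructor <;> linarith

lemma norm_gradG_le (Gbar : ℝ) (hG : 0 ≤ Gbar) (x : EuclideanSpace ℝ (Fin T ⊕ Fin T))
    (hv : ∀ t : Fin T, x (Sum.inr t) ∈ Set.Icc (0 : ℝ) Gbar) :
    ‖gradG x‖ ≤ Gbar + 1 := by
  rw [EuclideanSpace.norm_eq]
  refine le_trans (Real.sqrt_le_sqrt ?_) (by rw [Real.sqrt_sq (by linarith : (0:ℝ) ≤ Gbar + 1)])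
  rw [Fintype.sum_sum_type]
  have hpf_sq : ∀ t : Fin T, pf x t ^ 2 ≤ pf x t := fun t => by
    nlinarith [pf_nonneg x t, pf_le_one x t]
  have hr : ∑ t : Fin T, ‖gradG x (Sum.inr t)‖ ^ 2 ≤ 1 := by
    have : ∀ t : Fin T, ‖gradG x (Sum.inr t)‖ ^ 2 ≤ pf x t := by
      intro t
      have : gradG x (Sum.inr t) = pf x t := rfl
      rw [this, Real.norm_eq_abs, sq_abs]
      exact hpf_sq t
    exact le_trans (Finset.sum_le_sum fun t _ => this t) (sum_pf_le_one x)
  have hl : ∑ s : Fin T, ‖gradG x (Sum.inl s)‖ ^ 2 ≤ Gbar ^ 2 := by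
    have hterm : ∀ s : Fin T, ‖gradG x (Sum.inl s)‖ ^ 2 ≤ Gbar ^ 2 * pf x s := by
      intro s
      have h1 : ‖gradG x (Sum.inl s)‖ ^ 2 ≤ (Gbar * pf x s) ^ 2 := by
        rw [Real.norm_eq_abs]
        exact pow_le_pow_left₀ (abs_nonneg _) (abs_gradG_inl_le Gbar hG x hv s) 2
      refine le_trans h1 ?_
      rw [mul_pow]
      exact mul_le_mul_of_nonneg_left (hpf_sq s) (by positivity)
    calc ∑ s : Fin T, ‖gradG x (Sum.inl s)‖ ^ 2
        ≤ ∑ s : Fin T, Gbar ^ 2 * pf x s := Finset.sum_le_sum fun s _ => hterm s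
      _ = Gbar ^ 2 * ∑ s : Fin T, pf x s := (Finset.mul_sum _ _ _).symm
      _ ≤ Gbar ^ 2 * 1 := mul_le_mul_of_nonneg_left (sum_pf_le_one x) (by positivity)
      _ = Gbar ^ 2 := mul_one _
  nlinarith
theorem Gamma_gradient_bound_and_lipschitz (T : ℕ) (hT : 1 ≤ T) (Gbar : ℝ)
    (hG : 0 ≤ Gbar) :
    (∀ x : EuclideanSpace ℝ (Fin T ⊕ Fin T),
      (∀ t : Fin T, x (Sum.inr t) ∈ Set.Icc (0 : ℝ) Gbar) →
      ‖fderiv ℝ (Gamma T) x‖ ≤ Gbar + 1) ∧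
    (∀ x y : EuclideanSpace ℝ (Fin T ⊕ Fin T),
      (∀ t : Fin T, x (Sum.inr t) ∈ Set.Icc (0 : ℝ) Gbar) →
      (∀ t : Fin T, y (Sum.inr t) ∈ Set.Icc (0 : ℝ) Gbar) →
      |Gamma T x - Gamma T y| ≤ (Gbar + 1) * ‖x - y‖) := by
  have hFD : ∀ x : EuclideanSpace ℝ (Fin T ⊕ Fin T),
      HasFDerivAt (Gamma T) (innerSL ℝ (gradG x)) x := fun x =>
    sum_dG_eq x ▸ hasFDerivAt_Gamma' x
  have main : ∀ x : EuclideanSpace ℝ (Fin T ⊕ Fin T),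
      (∀ t : Fin T, x (Sum.inr t) ∈ Set.Icc (0 : ℝ) Gbar) →
      ‖fderiv ℝ (Gamma T) x‖ ≤ Gbar + 1 := by
    intro x hx
    rw [(hFD x).fderiv, innerSL_apply_norm]
    exact norm_gradG_le Gbar hG x hx
  refine ⟨main, ?_⟩
  intro x y hx hy
  set S : Set (EuclideanSpace ℝ (Fin T ⊕ Fin T)) :=
    {z | ∀ t : Fin T, z (Sum.inr t) ∈ Set.Icc (0 : ℝ) Gbar} with hS
  have hconv : Convex ℝ S := by
    intro z hz w hw a b ha hb hab
    intro t
    have hzw : (a • z + b • w) (Sum.inr t) = a * z (Sum.inr t) + b * w (Sum.inr t) := rfl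
    rw [hzw]
    exact (convex_Icc (0 : ℝ) Gbar) (hz t) (hw t) ha hb hab
  have hdiff : ∀ z ∈ S, DifferentiableAt ℝ (Gamma T) z := fun z _ =>
    (hFD z).differentiableAt
  have hbd : ∀ z ∈ S, ‖fderiv ℝ (Gamma T) z‖ ≤ Gbar + 1 := fun z hz => main z hz
  have := hconv.norm_image_sub_le_of_norm_fderiv_le hdiff hbd (hy : y ∈ S) (hx : x ∈ S)
  simpa [Real.norm_eq_abs] using this
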